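/- Let k ≥ 1, s ∈ Σ, and suppose H ⊆ {t ∈ Σ : t ⊇ s} is k-fat above s. Then H contains a subset consisting of pairwise incomparable (under extension) sequences that is (k−1)-fat above s. -/

import Mathlib

/-- A finite sequence `s` is an element of `Σ = ⋃_l ∏_{m<l} Z_{m+3}` iff `s(i) < i + 3`
for every `i < |s|`. -/
def ValidSeq (s : List ℕ) : Prop := ∀ i, i < s.length → s.getD i 0 < i + 3

/-- `S` is a (finite) `k`-slalom: all values are finite sets of size at most `k`,
and all but finitely many values are empty. (Only the values at indices `≥ |s|`
are relevant for a slalom above `s`.) -/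
def IsSlalom (k : ℕ) (S : ℕ → Finset ℕ) : Prop :=
  (∀ i, (S i).card ≤ k) ∧ ∃ N, ∀ i, N ≤ i → S i = ∅

/-- The height of a slalom above `s`: the least `i ≥ |s|` such that `S j = ∅` for all `j ≥ i`. -/
noncomputable def slalomHt (s : List ℕ) (S : ℕ → Finset ℕ) : ℕ :=
  sInf {i | s.length ≤ i ∧ ∀ j, i ≤ j → S j = ∅}

/-- `t` escapes the slalom `S` above `s`: `t ⊇ s`, `|t| ≥ ht(S)` and
`t(i) ∉ S(i)` for all `i ∈ [|s|, |t|)`. -/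
def Escapes (s t : List ℕ) (S : ℕ → Finset ℕ) : Prop :=
  s <+: t ∧ slalomHt s S ≤ t.length ∧
    ∀ i, s.length ≤ i → i < t.length → t.getD i 0 ∉ S i

/-- `F` is `k`-fat above `s`: every `k`-slalom above `s` is escaped by some `t ∈ F`. -/
def Fat (k : ℕ) (s : List ℕ) (F : Set (List ℕ)) : Prop :=
  ∀ S : ℕ → Finset ℕ, IsSlalom k S → ∃ t ∈ F, Escapes s t S

lemma aux_prefix_getD {u t : List ℕ} (h : u <+: t) {i : ℕ} (hi : i < u.length) :
    u.getD i 0 = t.getD i 0 := by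
  obtain ⟨r, rfl⟩ := h
  rw [List.getD_append _ _ _ _ hi]

/-- There is an enumeration of all `k`-slaloms. -/
lemma aux_slalom_enum (k : ℕ) : ∃ e : ℕ → (ℕ → Finset ℕ),
    (∀ n, IsSlalom k (e n)) ∧ ∀ S, IsSlalom k S → ∃ n, e n = S := by
  have hA : (setOf (IsSlalom k)).Countable := by
    have hsub : setOf (IsSlalom k) ⊆
        ⋃ N : ℕ, {S : ℕ → Finset ℕ | ∀ i, N ≤ i → S i = ∅} := by
      rintro S ⟨-, N, hN⟩
      exact Set.mem_iUnion.2 ⟨N, hN⟩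
    refine Set.Countable.mono hsub (Set.countable_iUnion fun N => ?_)
    rw [← Set.countable_coe_iff]
    have hinj : Function.Injective
        (fun S : {S : ℕ → Finset ℕ | ∀ i, N ≤ i → S i = ∅} => (fun i : Fin N => S.1 i)) := by
      rintro ⟨S, hS⟩ ⟨T, hT⟩ h
      apply Subtype.ext
      funext i
      show S i = T i
      by_cases hi : i < N
      · exact congrFun h ⟨i, hi⟩
      · rw [hS i (by omega), hT i (by omega)]
    exact hinj.countable
  have hne : (setOf (IsSlalom k)).Nonempty :=
    ⟨fun _ => ∅, fun i => by simp, 0, fun i _ => rfl⟩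
  obtain ⟨e, he⟩ := hA.exists_eq_range hne
  refine ⟨e, fun n => ?_, fun S hS => ?_⟩
  · have : e n ∈ setOf (IsSlalom k) := he ▸ Set.mem_range_self n
    exact this
  · have : S ∈ Set.range e := he ▸ hS
    obtain ⟨n, hn⟩ := this
    exact ⟨n, hn⟩

/-- Core step: given a `(k-1)`-slalom `S` and finitely many previously chosen sequences
(of pairwise distinct lengths `> |s|`), `H` contains an escaper of `S` that is longer than
all previous sequences and differs from each previous `u` at index `|u| - 1`. -/
lemma aux_core (s : List ℕ) (k : ℕ) (hk : 1 ≤ k) (H : Set (List ℕ)) (hfat : Fat k s H)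
    (S : ℕ → Finset ℕ) (hS : IsSlalom (k - 1) S) (prev : List (List ℕ))
    (hlen : ∀ u ∈ prev, s.length < u.length)
    (hdist : ∀ u ∈ prev, ∀ v ∈ prev, u.length = v.length → u = v) :
    ∃ t, t ∈ H ∧ Escapes s t S ∧ s.length < t.length ∧
      ∀ u ∈ prev, u.length < t.length ∧
        t.getD (u.length - 1) 0 ≠ u.getD (u.length - 1) 0 := by
  classical
  obtain ⟨hcard, N, hN⟩ := hS
  set L : ℕ := (prev.map List.length).sum with hLdef
  have hL : ∀ u ∈ prev, u.length ≤ L := fun u hu =>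
    List.single_le_sum (fun _ _ => Nat.zero_le _) _ (List.mem_map_of_mem (f := List.length) hu)
  set M : ℕ := max N (max L s.length) with hMdef
  have hNM : N ≤ M := le_max_left _ _
  have hLM : L ≤ M := le_trans (le_max_left _ _) (le_max_right _ _)
  have hsM : s.length ≤ M := le_trans (le_max_right _ _) (le_max_right _ _)
  set S' : ℕ → Finset ℕ := fun i =>
    (if i = M then {M + 3} else ∅) ∪ S i ∪
      (if h : ∃ u ∈ prev, u.length = i + 1 then {h.choose.getD i 0} else ∅) with hS'def
  have hnou : ∀ i, M ≤ i → ¬ ∃ u ∈ prev, u.length = i + 1 := by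
    rintro i hi ⟨u, hu, hul⟩
    have := hL u hu
    omega
  have hS'big : ∀ i, M + 1 ≤ i → S' i = ∅ := by
    intro i hi
    have h1 : S i = ∅ := hN i (by omega)
    simp only [hS'def, h1, if_neg (show i ≠ M by omega),
      dif_neg (hnou i (by omega))]
    simp
  have hslalom : IsSlalom k S' := by
    constructor
    · intro i
      by_cases hiM : i = M
      · subst hiM
        have h1 : S M = ∅ := hN M hNM
        simp only [hS'def, h1, if_pos rfl, dif_neg (hnou M le_rfl)]
        simpa using hk
      · have h1 : ((if i = M then ({M + 3} : Finset ℕ) else ∅) ∪ S i).card ≤ k - 1 := by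
          rw [if_neg hiM]
          simpa using hcard i
        have h2 : (if h : ∃ u ∈ prev, u.length = i + 1
            then ({h.choose.getD i 0} : Finset ℕ) else ∅).card ≤ 1 := by
          split <;> simp
        calc (S' i).card ≤ _ + _ := Finset.card_union_le _ _
          _ ≤ (k - 1) + 1 := add_le_add h1 h2
          _ ≤ k := by omega
    · exact ⟨M + 1, hS'big⟩
  obtain ⟨t, htH, hpre, hht, havoid⟩ := hfat S' hslalom
  have hmemM : (M + 3 : ℕ) ∈ S' M := by
    simp only [hS'def, if_pos rfl]
    simp
  have hhtS' : M + 1 ≤ slalomHt s S' := by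
    have hne : {i | s.length ≤ i ∧ ∀ j, i ≤ j → S' j = ∅}.Nonempty :=
      ⟨M + 1, by omega, fun j hj => hS'big j hj⟩
    have hmem := Nat.sInf_mem hne
    by_contra hcon
    push_neg at hcon
    have : S' M = ∅ := hmem.2 M (by
      have : slalomHt s S' ≤ M := by omega
      exact this)
    rw [this] at hmemM
    exact absurd hmemM (Finset.notMem_empty _)
  have htlen : M + 1 ≤ t.length := le_trans hhtS' hht
  have hescS : Escapes s t S := by
    refine ⟨hpre, ?_, ?_⟩
    · have h1 : slalomHt s S ≤ max N s.length :=
        Nat.sInf_le ⟨le_max_right _ _, fun j hj => hN j (le_trans (le_max_left _ _) hj)⟩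
      have h2 : max N s.length ≤ M := max_le hNM hsM
      omega
    · intro i h1 h2 hmem
      refine havoid i h1 h2 ?_
      simp only [hS'def, Finset.mem_union]
      exact Or.inl (Or.inr hmem)
  refine ⟨t, htH, hescS, by omega, ?_⟩
  intro u hu
  have hul : s.length < u.length := hlen u hu
  have huL : u.length ≤ L := hL u hu
  set i : ℕ := u.length - 1 with hidef
  have hi1 : i + 1 = u.length := by omega
  have hit : i < t.length := by omega
  refine ⟨by omega, ?_⟩
  have hex : ∃ w ∈ prev, w.length = i + 1 := ⟨u, hu, hi1.symm⟩
  have hw := hex.choose_spec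
  have hwu : hex.choose = u := hdist _ hw.1 u hu (by rw [hw.2, hi1])
  have hmem' : u.getD i 0 ∈ S' i := by
    simp only [hS'def, Finset.mem_union, dif_pos hex]
    right
    rw [hwu]
    exact Finset.mem_singleton_self _
  have havd := havoid i (by omega) hit
  intro heq
  rw [heq] at havd
  exact havd hmem'

theorem stmt11 (s : List ℕ) (hs : ValidSeq s) (k : ℕ) (hk : 1 ≤ k)
    (H : Set (List ℕ)) (hH : H ⊆ {t | ValidSeq t ∧ s <+: t}) (hfat : Fat k s H) :
    ∃ H' ⊆ H, (∀ t₁ ∈ H', ∀ t₂ ∈ H', t₁ ≠ t₂ → ¬ t₁ <+: t₂ ∧ ¬ t₂ <+: t₁) ∧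
      Fat (k - 1) s H' := by
  classical
  obtain ⟨e, he1, he2⟩ := aux_slalom_enum (k - 1)
  have key : ∀ (n : ℕ) (prev : List (List ℕ)), ∃ t,
      ((∀ u ∈ prev, s.length < u.length) ∧
        (∀ u ∈ prev, ∀ v ∈ prev, u.length = v.length → u = v)) →
      t ∈ H ∧ Escapes s t (e n) ∧ s.length < t.length ∧
        ∀ u ∈ prev, u.length < t.length ∧
          t.getD (u.length - 1) 0 ≠ u.getD (u.length - 1) 0 := by
    intro n prev
    by_cases hc : (∀ u ∈ prev, s.length < u.length) ∧
        (∀ u ∈ prev, ∀ v ∈ prev, u.length = v.length → u = v)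
    · obtain ⟨t, ht⟩ := aux_core s k hk H hfat (e n) (he1 n) prev hc.1 hc.2
      exact ⟨t, fun _ => ht⟩
    · exact ⟨[], fun h => absurd h hc⟩
  choose f hf using key
  let g : ℕ → List (List ℕ) := fun n => Nat.rec [] (fun m ih => ih ++ [f m ih]) n
  have hgs : ∀ n, g (n + 1) = g n ++ [f n (g n)] := fun n => rfl
  have inv : ∀ n, (∀ u ∈ g n, u ∈ H) ∧ (∀ u ∈ g n, s.length < u.length) ∧
      (∀ u ∈ g n, ∀ v ∈ g n, u.length = v.length → u = v) := by
    intro n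
    induction n with
    | zero =>
      refine ⟨?_, ?_, ?_⟩ <;> intro u hu <;> exact absurd hu (fun h => List.not_mem_nil h)
    | succ m ih =>
      obtain ⟨ihH, ihl, ihd⟩ := ih
      obtain ⟨htH, hesc, htl, hblock⟩ := hf m (g m) ⟨ihl, ihd⟩
      rw [hgs]
      refine ⟨?_, ?_, ?_⟩
      · intro u hu
        rcases List.mem_append.1 hu with h | h
        · exact ihH u h
        · rw [List.mem_singleton.1 h]; exact htH
      · intro u hu
        rcases List.mem_append.1 hu with h | h
        · exact ihl u h
        · rw [List.mem_singleton.1 h]; exact htl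
      · intro u hu v hv huv
        rcases List.mem_append.1 hu with h | h <;>
          rcases List.mem_append.1 hv with h' | h'
        · exact ihd u h v h' huv
        · exfalso
          rw [List.mem_singleton.1 h'] at huv
          have := (hblock u h).1
          omega
        · exfalso
          rw [List.mem_singleton.1 h] at huv
          have := (hblock v h').1
          omega
        · rw [List.mem_singleton.1 h, List.mem_singleton.1 h']
  set T : ℕ → List ℕ := fun n => f n (g n) with hTdef
  have hT : ∀ n, T n ∈ H ∧ Escapes s (T n) (e n) ∧ s.length < (T n).length ∧
      ∀ u ∈ g n, u.length < (T n).length ∧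
        (T n).getD (u.length - 1) 0 ≠ u.getD (u.length - 1) 0 :=
    fun n => hf n (g n) ⟨(inv n).2.1, (inv n).2.2⟩
  have hTg : ∀ n m, m < n → T m ∈ g n := by
    intro n
    induction n with
    | zero => intro m hm; omega
    | succ p ih =>
      intro m hm
      rw [hgs]
      rcases Nat.lt_or_ge m p with h | h
      · exact List.mem_append_left _ (ih m h)
      · have : m = p := by omega
        subst this
        exact List.mem_append_right _ (List.mem_singleton_self _)
  have main : ∀ m n, m < n → ¬ T m <+: T n ∧ ¬ T n <+: T m := by
    intro m n h
    obtain ⟨hlen, hne'⟩ := (hT n).2.2.2 (T m) (hTg n m h)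
    have hms : s.length < (T m).length := (hT m).2.2.1
    have hi : (T m).length - 1 < (T m).length := by omega
    constructor
    · intro hp
      exact hne' ((aux_prefix_getD hp hi).symm)
    · intro hp
      have := hp.length_le
      omega
  refine ⟨Set.range T, ?_, ?_, ?_⟩
  · rintro _ ⟨n, rfl⟩
    exact (hT n).1
  · rintro _ ⟨m, rfl⟩ _ ⟨n, rfl⟩ hne
    rcases lt_trichotomy m n with h | h | h
    · exact main m n h
    · exact absurd (by rw [h]) hne
    · exact ⟨(main n m h).2, (main n m h).1⟩
  · intro S hS
    obtain ⟨n, rfl⟩ := he2 S hS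
    exact ⟨T n, ⟨n, rfl⟩, (hT n).2.1⟩
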